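/- arXiv:2502.07745 — 2 statements merged into one kernel-verified Lean document; each statement's English description precedes it below -/
import Mathlib

section
/- For probability vectors P, Q on a finite set and a convex lower-semicontinuous function f with (0,∞) ⊆ dom f, the f-divergence satisfies the variational formula S_f(P‖Q) = sup over functions z : X → dom f* of ∑_x P(x)·z(x) − ∑_x Q(x)·f*(z(x)), where f* is the Fenchel conjugate of f. -/
noncomputable section

/-- Fenchel conjugate `f*(z) = sup_{t ∈ dom f} (t z - f t)` of `f : ℝ → ℝ ∪ {+∞}`. -/
def fconj (f : ℝ → EReal) (z : ℝ) : EReal :=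
  ⨆ (t : ℝ) (_ : f t ≠ ⊤), ((t * z : ℝ) : EReal) - f t

private lemma ereal_coe_sum {X : Type*} (s : Finset X) (h : X → ℝ) :
    ((∑ x ∈ s, h x : ℝ) : EReal) = ∑ x ∈ s, ((h x : ℝ) : EReal) := by
  induction s using Finset.cons_induction with
  | empty => simp
  | cons a s ha ih => rw [Finset.sum_cons, Finset.sum_cons, EReal.coe_add, ih]

/-- Chord inequality for an `EReal`-valued convex function that is nowhere `⊥`. -/
private lemma chord (f : ℝ → EReal)
    (hconv : ∀ a b θ : ℝ, 0 ≤ θ → θ ≤ 1 →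
      f (θ * a + (1 - θ) * b) ≤ (θ : EReal) * f a + ((1 - θ : ℝ) : EReal) * f b)
    (hbot : ∀ t, f t ≠ ⊥)
    {u v w : ℝ} (huv : u < v) (hvw : v < w) (hu : f u ≠ ⊤) (hw : f w ≠ ⊤) :
    f v ≠ ⊤ ∧
      ((f v).toReal - (f u).toReal) * (w - v) ≤ ((f w).toReal - (f v).toReal) * (v - u) := by
  set gu := (f u).toReal
  set gw := (f w).toReal
  have hfu : f u = (gu : EReal) := (EReal.coe_toReal hu (hbot u)).symm
  have hfw : f w = (gw : EReal) := (EReal.coe_toReal hw (hbot w)).symm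
  have hwu : (0:ℝ) < w - u := by linarith
  set θ : ℝ := (w - v) / (w - u) with hθdef
  have hθ0 : 0 ≤ θ := div_nonneg (by linarith) hwu.le
  have hθ1 : θ ≤ 1 := by
    rw [div_le_one hwu]; linarith
  have hcomb : θ * u + (1 - θ) * w = v := by
    field_simp [hθdef]
    have key : θ * (w - u) = w - v := div_mul_cancel₀ _ hwu.ne'
    linear_combination (-1 : ℝ) * key
  have h := hconv u w θ hθ0 hθ1
  rw [hcomb, hfu, hfw, ← EReal.coe_mul, ← EReal.coe_mul, ← EReal.coe_add] at h
  have hvtop : f v ≠ ⊤ := by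
    intro hv
    rw [hv, top_le_iff] at h
    exact EReal.coe_ne_top _ h
  refine ⟨hvtop, ?_⟩
  have hfv : f v = ((f v).toReal : EReal) := (EReal.coe_toReal hvtop (hbot v)).symm
  rw [hfv, EReal.coe_le_coe_iff] at h
  set gv := (f v).toReal
  -- h : gv ≤ θ * gu + (1 - θ) * gw
  have h1 : gv * (w - u) ≤ (w - v) * gu + (v - u) * gw := by
    have hm := mul_le_mul_of_nonneg_right h hwu.le
    have e1 : θ * (w - u) = w - v := by rw [hθdef]; field_simp
    have e2 : (1 - θ) * (w - u) = v - u := by rw [hθdef]; field_simp; ring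
    have h2 : (θ * gu + (1 - θ) * gw) * (w - u) = (w - v) * gu + (v - u) * gw := by
      rw [show (θ * gu + (1 - θ) * gw) * (w - u)
          = (θ * (w - u)) * gu + ((1 - θ) * (w - u)) * gw by ring, e1, e2]
    linarith [hm, h2]
  nlinarith [h1]

/-- Existence of a supporting line at any positive point. -/
private lemma exists_support (f : ℝ → EReal)
    (hconv : ∀ a b θ : ℝ, 0 ≤ θ → θ ≤ 1 →
      f (θ * a + (1 - θ) * b) ≤ (θ : EReal) * f a + ((1 - θ : ℝ) : EReal) * f b)
    (hbot : ∀ t, f t ≠ ⊥) (hdom : ∀ t : ℝ, 0 < t → f t ≠ ⊤)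
    (t₀ : ℝ) (ht₀ : 0 < t₀) :
    ∃ z : ℝ, ∀ t : ℝ, (((f t₀).toReal + z * (t - t₀) : ℝ) : EReal) ≤ f t := by
  set g : ℝ → ℝ := fun t => (f t).toReal with hg
  set A : Set ℝ := (fun s => (g t₀ - g s) / (t₀ - s)) '' {s : ℝ | s < t₀ ∧ f s ≠ ⊤} with hA
  have hAne : A.Nonempty := by
    refine ⟨(g t₀ - g (t₀/2)) / (t₀ - t₀/2), ⟨t₀/2, ⟨by linarith, hdom _ (by linarith)⟩, rfl⟩⟩
  -- every right slope is an upper bound of A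
  have hub : ∀ u : ℝ, t₀ < u → f u ≠ ⊤ → ∀ a ∈ A, a ≤ (g u - g t₀) / (u - t₀) := by
    rintro u hu hut _ ⟨s, ⟨hs, hstop⟩, rfl⟩
    have hch := (chord f hconv hbot hs hu hstop hut).2
    rw [div_le_div_iff₀ (by linarith) (by linarith)]
    nlinarith [hch]
  have hbdd : BddAbove A :=
    ⟨(g (2*t₀) - g t₀) / (2*t₀ - t₀), fun a ha =>
      hub (2*t₀) (by linarith) (hdom _ (by linarith)) a ha⟩
  refine ⟨sSup A, fun t => ?_⟩
  by_cases htop : f t = ⊤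
  · rw [htop]; exact le_top
  have hft : f t = ((g t : ℝ) : EReal) := (EReal.coe_toReal htop (hbot t)).symm
  rw [hft, EReal.coe_le_coe_iff]
  rcases lt_trichotomy t t₀ with hlt | heq | hgt
  · have hmem : (g t₀ - g t) / (t₀ - t) ∈ A := ⟨t, ⟨hlt, htop⟩, rfl⟩
    have := le_csSup hbdd hmem
    rw [div_le_iff₀ (by linarith : (0:ℝ) < t₀ - t)] at this
    nlinarith [this]
  · rw [heq]; simp; exact le_rfl
  · have hle : sSup A ≤ (g t - g t₀) / (t - t₀) :=
      csSup_le hAne (hub t hgt htop)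
    rw [le_div_iff₀ (by linarith : (0:ℝ) < t - t₀)] at hle
    nlinarith [hle]

/-- Variational formula for the classical `f`-divergence of strictly positive
probability vectors `P, Q` on a finite set:
`S_f(P‖Q) = sup_{z : X → dom f*} ∑_x P(x) z(x) - ∑_x Q(x) f*(z(x))`. -/
theorem fDivergence_variational {X : Type*} [Fintype X]
    (f : ℝ → EReal)
    (hconv : ∀ a b θ : ℝ, 0 ≤ θ → θ ≤ 1 →
      f (θ * a + (1 - θ) * b) ≤ (θ : EReal) * f a + ((1 - θ : ℝ) : EReal) * f b)
    (hlsc : LowerSemicontinuous f)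
    (hdom : ∀ t : ℝ, 0 < t → f t ≠ ⊤)
    (P Q : X → ℝ) (hP : ∀ x, 0 < P x) (hQ : ∀ x, 0 < Q x)
    (hPsum : ∑ x, P x = 1) (hQsum : ∑ x, Q x = 1) :
    ∑ x, (Q x : EReal) * f (P x / Q x) =
      ⨆ (z : X → ℝ) (_ : ∀ x, fconj f (z x) ≠ ⊤),
        ∑ x, (((P x * z x : ℝ) : EReal) - (Q x : EReal) * fconj f (z x)) := by
  classical
  have hX : Nonempty X := by
    by_contra h
    rw [not_nonempty_iff] at h
    simp at hPsum
  by_cases hbotc : ∃ c, f c = ⊥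
  · -- degenerate case : f ≡ ⊥
    obtain ⟨c, hc⟩ := hbotc
    have hall : ∀ t, f t = ⊥ := by
      intro t
      rcases eq_or_ne t c with rfl | hned
      · exact hc
      have h2 := hconv c (2*t - c) (1/2) (by norm_num) (by norm_num)
      rw [show (1/2 : ℝ) * c + (1 - 1/2) * (2*t - c) = t by ring] at h2
      rw [hc, EReal.coe_mul_bot_of_pos (by norm_num : (0:ℝ) < 1/2), EReal.bot_add] at h2
      exact le_bot_iff.mp h2
    obtain ⟨x₀⟩ := hX
    have hL : ∑ x, (Q x : EReal) * f (P x / Q x) = ⊥ := by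
      have : ∀ x : X, (Q x : EReal) * f (P x / Q x) = ⊥ := fun x => by
        rw [hall, EReal.coe_mul_bot_of_pos (hQ x)]
      rw [Finset.sum_congr rfl (fun x _ => this x),
        ← Finset.add_sum_erase _ _ (Finset.mem_univ x₀)]
      exact EReal.bot_add _
    rw [hL]
    symm
    rw [le_bot_iff.symm]
    apply iSup_le
    intro z
    apply iSup_le
    intro h
    exfalso
    apply h x₀
    rw [← top_le_iff]
    have h1 : f 1 ≠ ⊤ := hdom 1 one_pos
    have : ((1 * z x₀ : ℝ) : EReal) - f 1 ≤ fconj f (z x₀) :=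
      le_iSup₂ (f := fun t (_ : f t ≠ ⊤) => ((t * z x₀ : ℝ) : EReal) - f t) 1 h1
    rwa [hall 1, EReal.coe_sub_bot] at this
  · push_neg at hbotc
    have hbot : ∀ t, f t ≠ ⊥ := hbotc
    set g : ℝ → ℝ := fun t => (f t).toReal with hg
    set t₀ : X → ℝ := fun x => P x / Q x with ht₀def
    have hpos : ∀ x, 0 < t₀ x := fun x => div_pos (hP x) (hQ x)
    have hft₀ : ∀ x, f (t₀ x) = ((g (t₀ x) : ℝ) : EReal) := fun x =>
      (EReal.coe_toReal (hdom _ (hpos x)) (hbot _)).symm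
    have hQt : ∀ x, Q x * t₀ x = P x := fun x => by
      show Q x * (P x / Q x) = P x
      rw [mul_comm]
      exact div_mul_cancel₀ _ (hQ x).ne'
    -- LHS as a real coercion
    have hLHS : ∑ x, (Q x : EReal) * f (P x / Q x)
        = ((∑ x, Q x * g (t₀ x) : ℝ) : EReal) := by
      rw [ereal_coe_sum]
      refine Finset.sum_congr rfl (fun x _ => ?_)
      rw [show P x / Q x = t₀ x from rfl, hft₀ x, ← EReal.coe_mul]
    apply le_antisymm
    · -- choose supporting slopes
      choose z₀ hz₀ using fun x => exists_support f hconv hbot hdom (t₀ x) (hpos x)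
      have hconj : ∀ x, fconj f (z₀ x) = ((t₀ x * z₀ x - g (t₀ x) : ℝ) : EReal) := by
        intro x
        apply le_antisymm
        · apply iSup₂_le
          intro t ht
          have hft : f t = ((g t : ℝ) : EReal) := (EReal.coe_toReal ht (hbot t)).symm
          rw [hft, ← EReal.coe_sub, EReal.coe_le_coe_iff]
          have h := hz₀ x t
          rw [hft, EReal.coe_le_coe_iff] at h
          nlinarith [h]
        · have h1 : f (t₀ x) ≠ ⊤ := hdom _ (hpos x)
          have h2 : ((t₀ x * z₀ x : ℝ) : EReal) - f (t₀ x) ≤ fconj f (z₀ x) :=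
            le_iSup₂ (f := fun t (_ : f t ≠ ⊤) => ((t * z₀ x : ℝ) : EReal) - f t) (t₀ x) h1
          rwa [hft₀ x, ← EReal.coe_sub] at h2
      have hzne : ∀ x, fconj f (z₀ x) ≠ ⊤ := fun x => by
        rw [hconj x]; exact EReal.coe_ne_top _
      have hS : ∑ x, (((P x * z₀ x : ℝ) : EReal) - (Q x : EReal) * fconj f (z₀ x))
          = ((∑ x, Q x * g (t₀ x) : ℝ) : EReal) := by
        rw [ereal_coe_sum]
        refine Finset.sum_congr rfl (fun x _ => ?_)
        rw [hconj x, ← EReal.coe_mul, ← EReal.coe_sub]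
        congr 1
        have := hQt x
        linear_combination (-z₀ x) * this
      calc ∑ x, (Q x : EReal) * f (P x / Q x)
          = ∑ x, (((P x * z₀ x : ℝ) : EReal) - (Q x : EReal) * fconj f (z₀ x)) := by
            rw [hLHS, hS]
        _ ≤ _ := le_iSup₂ (f := fun (z : X → ℝ) (_ : ∀ x, fconj f (z x) ≠ ⊤) =>
            ∑ x, (((P x * z x : ℝ) : EReal) - (Q x : EReal) * fconj f (z x))) z₀ hzne
    · apply iSup₂_le
      intro z hz
      rw [hLHS]
      have key : ∀ x : X, ((P x * z x : ℝ) : EReal) - (Q x : EReal) * fconj f (z x)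
          ≤ ((Q x * g (t₀ x) : ℝ) : EReal) := by
        intro x
        have h1 : f (t₀ x) ≠ ⊤ := hdom _ (hpos x)
        have hge : ((t₀ x * z x - g (t₀ x) : ℝ) : EReal) ≤ fconj f (z x) := by
          have h2 : ((t₀ x * z x : ℝ) : EReal) - f (t₀ x) ≤ fconj f (z x) :=
            le_iSup₂ (f := fun t (_ : f t ≠ ⊤) => ((t * z x : ℝ) : EReal) - f t) (t₀ x) h1
          rwa [hft₀ x, ← EReal.coe_sub] at h2
        have hnebot : fconj f (z x) ≠ ⊥ := by
          intro hb; rw [hb, le_bot_iff] at hge; exact EReal.coe_ne_bot _ hge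
        set c : ℝ := (fconj f (z x)).toReal with hcdef
        have hcf : fconj f (z x) = ((c : ℝ) : EReal) := (EReal.coe_toReal (hz x) hnebot).symm
        rw [hcf, EReal.coe_le_coe_iff] at hge
        rw [hcf, ← EReal.coe_mul, ← EReal.coe_sub, EReal.coe_le_coe_iff]
        have hQtx := hQt x
        have hPz : Q x * (t₀ x * z x) = P x * z x := by rw [← hQtx, mul_assoc]
        nlinarith [mul_le_mul_of_nonneg_left hge (hQ x).le, hPz]
      calc ∑ x, (((P x * z x : ℝ) : EReal) - (Q x : EReal) * fconj f (z x))
          ≤ ∑ x, ((Q x * g (t₀ x) : ℝ) : EReal) :=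
            Finset.sum_le_sum (fun x _ => key x)
        _ = ((∑ x, Q x * g (t₀ x) : ℝ) : EReal) := (ereal_coe_sum _ _).symm

end
end

section
/- For any positive semidefinite ρ, σ with tr ρ = 1 and any c > 0, D_M(ρ‖σ/c) = D_M(ρ‖σ) + log c; consequently, for the support function h_C of a compact convex set C of positive semidefinite operators, sup_{ω ≻ 0} (−h_C(ω) − D_M(ρ‖ω) + 1) = sup_{ω ≻ 0, h_C(ω) ≤ 1} (−D_M(ρ‖ω)), using log x ≤ x − 1. -/
open Matrix
open scoped ComplexOrder

noncomputable section

/-- Single Kullback-Leibler term `p log(p/q)` with the standard conventions. -/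
def klQ (p q : ℝ) : EReal :=
  if p = 0 then 0 else if q = 0 then ⊤ else ((p * Real.log (p / q) : ℝ) : EReal)

/-- The measured relative entropy: supremum over POVMs of the classical
Kullback-Leibler divergence of the induced distributions. -/
def measKL {ι : Type*} [Fintype ι] [DecidableEq ι] (ρ σ : Matrix ι ι ℂ) : EReal :=
  ⨆ (m : ℕ) (M : Fin m → Matrix ι ι ℂ)
    (_ : (∀ x, (M x).PosSemidef) ∧ ∑ x, M x = 1),
      ∑ x, klQ ((ρ * M x).trace.re) ((σ * M x).trace.re)

/-- Support function of a set of matrices. -/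
def suppFun {ι : Type*} [Fintype ι] (C : Set (Matrix ι ι ℂ))
    (ω : Matrix ι ι ℂ) : ℝ :=
  sSup ((fun σ => (σ * ω).trace.re) '' C)

/- auxiliary lemmas -/

lemma myEReal.sub_add_cancel (y : EReal) (c : ℝ) : y - (c : EReal) + (c : EReal) = y := by
  have h := EReal.add_sub_cancel_right (a := y) (b := -c)
  rw [EReal.coe_neg, sub_eq_add_neg, neg_neg] at h
  rw [sub_eq_add_neg, ← EReal.coe_neg]
  exact h

lemma myEReal.iSup_add_coe {α : Sort*} [Nonempty α] (f : α → EReal) (c : ℝ) :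
    (⨆ i, (f i + (c : EReal))) = (⨆ i, f i) + (c : EReal) := by
  apply le_antisymm
  · exact iSup_le fun i => add_le_add_left (le_iSup f i) _
  · have h1 : (⨆ i, f i) ≤ (⨆ i, (f i + (c : EReal))) - (c : EReal) := by
      apply iSup_le; intro i
      have : f i = f i + (c : EReal) - (c : EReal) :=
        (EReal.add_sub_cancel_right (a := f i) (b := c)).symm
      rw [this]
      have hle : f i + (c : EReal) ≤ ⨆ j, (f j + (c : EReal)) :=
        le_iSup (fun j => f j + (c : EReal)) i
      exact EReal.sub_le_sub hle le_rfl
    calc (⨆ i, f i) + (c : EReal)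
        ≤ ((⨆ i, (f i + (c : EReal))) - (c : EReal)) + (c : EReal) :=
          add_le_add_left h1 _
      _ = _ := myEReal.sub_add_cancel _ _

lemma myEReal.iSup_prop_add (P : Prop) (f g : EReal) (c : ℝ) (h : P → f = g + (c : EReal)) :
    (⨆ _ : P, f) = (⨆ _ : P, g) + (c : EReal) := by
  by_cases hP : P
  · rw [iSup_pos hP, iSup_pos hP, h hP]
  · rw [iSup_neg hP, iSup_neg hP, EReal.bot_add]

lemma myEReal.coe_sum {α : Type*} (s : Finset α) (f : α → ℝ) :
    ((∑ i ∈ s, f i : ℝ) : EReal) = ∑ i ∈ s, ((f i : ℝ) : EReal) :=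
  map_sum (⟨⟨(fun x : ℝ => (x : EReal)), EReal.coe_zero⟩,
    fun a b => EReal.coe_add a b⟩ : ℝ →+ EReal) f s

lemma klQ_scale (p q c : ℝ) (hc : 0 < c) :
    klQ p (c⁻¹ * q) = klQ p q + ((p * Real.log c : ℝ) : EReal) := by
  unfold klQ
  by_cases hp : p = 0
  · simp [hp]
  by_cases hq : q = 0
  · have h0 : c⁻¹ * q = 0 := by rw [hq, mul_zero]
    rw [if_neg hp, if_neg hp, if_pos h0, if_pos hq]
    exact (EReal.top_add_coe _).symm
  have hcq : c⁻¹ * q ≠ 0 := mul_ne_zero (inv_ne_zero hc.ne') hq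
  rw [if_neg hp, if_neg hcq, if_neg hp, if_neg hq, ← EReal.coe_add]
  have h1 : p / (c⁻¹ * q) = c * (p / q) := by field_simp
  rw [h1, Real.log_mul hc.ne' (div_ne_zero hp hq)]
  exact EReal.coe_eq_coe_iff.mpr (by ring)

lemma measKL_smul {ι : Type*} [Fintype ι] [DecidableEq ι]
    (ρ σ : Matrix ι ι ℂ) (hρtr : ρ.trace = 1) (c : ℝ) (hc : 0 < c) :
    measKL ρ (((c : ℂ)⁻¹) • σ) = measKL ρ σ + ((Real.log c : ℝ) : EReal) := by
  unfold measKL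
  have key : ∀ (m : ℕ) (M : Fin m → Matrix ι ι ℂ),
      (⨆ (_ : (∀ x, (M x).PosSemidef) ∧ ∑ x, M x = 1),
        ∑ x, klQ ((ρ * M x).trace.re) (((((c : ℂ)⁻¹) • σ) * M x).trace.re))
      = (⨆ (_ : (∀ x, (M x).PosSemidef) ∧ ∑ x, M x = 1),
        ∑ x, klQ ((ρ * M x).trace.re) ((σ * M x).trace.re)) + ((Real.log c : ℝ) : EReal) := by
    intro m M
    apply myEReal.iSup_prop_add
    rintro ⟨hpsd, hsum⟩
    have hq : ∀ x, ((((c : ℂ)⁻¹) • σ) * M x).trace.re = c⁻¹ * ((σ * M x).trace.re) := by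
      intro x
      rw [Matrix.smul_mul, Matrix.trace_smul]
      rw [show ((c : ℂ)⁻¹) = ((c⁻¹ : ℝ) : ℂ) by push_cast; ring]
      simp [Complex.re_ofReal_mul]
    have hp1 : ∑ x, ((ρ * M x).trace.re) = 1 := by
      have : ∑ x, (ρ * M x).trace = 1 := by
        rw [← Matrix.trace_sum, ← Finset.mul_sum, hsum, mul_one, hρtr]
      calc ∑ x, ((ρ * M x).trace.re) = (∑ x, (ρ * M x).trace).re := (Complex.re_sum _ _).symm
        _ = 1 := by rw [this]; simp
    calc ∑ x, klQ ((ρ * M x).trace.re) (((((c : ℂ)⁻¹) • σ) * M x).trace.re)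
        = ∑ x, (klQ ((ρ * M x).trace.re) ((σ * M x).trace.re)
            + ((((ρ * M x).trace.re) * Real.log c : ℝ) : EReal)) := by
          refine Finset.sum_congr rfl fun x _ => ?_
          rw [hq x, klQ_scale _ _ _ hc]
      _ = (∑ x, klQ ((ρ * M x).trace.re) ((σ * M x).trace.re))
            + ∑ x, ((((ρ * M x).trace.re) * Real.log c : ℝ) : EReal) :=
          Finset.sum_add_distrib
      _ = _ := by
          rw [← myEReal.coe_sum, ← Finset.sum_mul, hp1, one_mul]
  calc (⨆ (m : ℕ) (M : Fin m → Matrix ι ι ℂ)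
          (_ : (∀ x, (M x).PosSemidef) ∧ ∑ x, M x = 1),
        ∑ x, klQ ((ρ * M x).trace.re) (((((c : ℂ)⁻¹) • σ) * M x).trace.re))
      = ⨆ (m : ℕ), ((⨆ (M : Fin m → Matrix ι ι ℂ)
          (_ : (∀ x, (M x).PosSemidef) ∧ ∑ x, M x = 1),
        ∑ x, klQ ((ρ * M x).trace.re) ((σ * M x).trace.re)) + ((Real.log c : ℝ) : EReal)) := by
        refine iSup_congr fun m => ?_
        rw [← myEReal.iSup_add_coe]
        exact iSup_congr fun M => key m M
    _ = _ := myEReal.iSup_add_coe _ _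

lemma posDef_smul {ι : Type*} [Fintype ι] [DecidableEq ι]
    {ω : Matrix ι ι ℂ} (hω : ω.PosDef) {r : ℝ} (hr : 0 < r) :
    (((r : ℂ)) • ω).PosDef := by
  constructor
  · have : ((r : ℂ) • ω)ᴴ = (starRingEnd ℂ) (r : ℂ) • ωᴴ := Matrix.conjTranspose_smul _ _
    rw [Matrix.IsHermitian, this, hω.1]
    simp
  · intro x hx
    exact (hω.smul (show (0 : ℂ) < (r : ℂ) by exact_mod_cast hr)).2 hx

lemma suppFun_smul {ι : Type*} [Fintype ι] (C : Set (Matrix ι ι ℂ))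
    (hne : C.Nonempty) (hC : IsCompact C) (ω : Matrix ι ι ℂ) {r : ℝ} (hr : 0 < r) :
    suppFun C (((r : ℂ)) • ω) = r * suppFun C ω := by
  have hcont : Continuous (fun σ : Matrix ι ι ℂ => (σ * ω).trace.re) :=
    Complex.continuous_re.comp ((continuous_id.matrix_mul continuous_const).matrix_trace)
  have himg : (fun σ : Matrix ι ι ℂ => (σ * (((r : ℂ)) • ω)).trace.re) '' C
      = (fun x : ℝ => r * x) '' ((fun σ => (σ * ω).trace.re) '' C) := by
    rw [← Set.image_comp]
    refine Set.image_congr fun σ _ => ?_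
    simp only [Function.comp_apply]
    rw [Matrix.mul_smul, Matrix.trace_smul]
    exact Complex.re_ofReal_mul r _
  have hne' : ((fun σ => (σ * ω).trace.re) '' C).Nonempty := hne.image _
  have hbdd : BddAbove ((fun σ => (σ * ω).trace.re) '' C) :=
    (hC.image hcont).bddAbove
  unfold suppFun
  rw [himg]
  have h := ((OrderIso.mulLeft₀ r hr).map_csSup' hne' hbdd).symm
  simpa [OrderIso.mulLeft₀_apply, Set.image_image] using h

lemma helper_le (D : EReal) (a b : ℝ) (hab : a ≤ b) :
    -D + ((a : ℝ) : EReal) ≤ -D + ((b : ℝ) : EReal) :=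
  add_le_add_right (EReal.coe_le_coe_iff.mpr hab) _

lemma rearrange (D : EReal) (c : ℝ) :
    -((c : ℝ) : EReal) - D + 1 = -D + (((1 - c : ℝ)) : EReal) := by
  rw [sub_eq_add_neg, ← EReal.coe_neg, ← EReal.coe_one,
    add_comm ((((-c : ℝ)) : EReal)) (-D), add_assoc, ← EReal.coe_add]
  congr 2
  ring

lemma rearrange2 (D : EReal) (b : ℝ) :
    -D - ((b : ℝ) : EReal) = -D + (((-b : ℝ)) : EReal) := by
  rw [sub_eq_add_neg, EReal.coe_neg]

/-- Scaling property of the measured relative entropy,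
`D_M(ρ‖σ/c) = D_M(ρ‖σ) + log c`, and its consequence for support functions:
`sup_{ω ≻ 0} (-h_C(ω) - D_M(ρ‖ω) + 1) = sup_{ω ≻ 0, h_C(ω) ≤ 1} (-D_M(ρ‖ω))`. -/
theorem measKL_scaling_and_normalization {ι : Type*} [Fintype ι] [DecidableEq ι]
    (ρ : Matrix ι ι ℂ) (hρ : ρ.PosSemidef) (hρtr : ρ.trace = 1)
    (C : Set (Matrix ι ι ℂ)) (hCpsd : ∀ σ ∈ C, σ.PosSemidef)
    (hCcompact : IsCompact C) (hCconvex : Convex ℝ C)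
    (hCpos : ∀ ω : Matrix ι ι ℂ, ω.PosDef → 0 < suppFun C ω) :
    (∀ (σ : Matrix ι ι ℂ), σ.PosSemidef → ∀ c : ℝ, 0 < c →
      measKL ρ (((c : ℂ)⁻¹) • σ) = measKL ρ σ + ((Real.log c : ℝ) : EReal)) ∧
    (⨆ (ω : Matrix ι ι ℂ) (_ : ω.PosDef),
        (-((suppFun C ω : ℝ) : EReal) - measKL ρ ω + 1)) =
      (⨆ (ω : Matrix ι ι ℂ) (_ : ω.PosDef ∧ suppFun C ω ≤ 1),
        -measKL ρ ω) := by
  have hCne : C.Nonempty := by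
    by_contra h
    have h1 := hCpos 1 Matrix.PosDef.one
    rw [Set.not_nonempty_iff_eq_empty] at h
    simp [suppFun, h, Real.sSup_empty] at h1
  refine ⟨fun σ _ c hc => measKL_smul ρ σ hρtr c hc, ?_⟩
  apply le_antisymm
  · refine iSup₂_le fun ω hω => ?_
    set c : ℝ := suppFun C ω with hcdef
    have hc : 0 < c := hCpos ω hω
    have hω' : (((c⁻¹ : ℝ) : ℂ) • ω).PosDef := posDef_smul hω (inv_pos.mpr hc)
    have hcast : ((c⁻¹ : ℝ) : ℂ) = ((c : ℂ))⁻¹ := by push_cast; ring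
    have hsupp : suppFun C (((c⁻¹ : ℝ) : ℂ) • ω) = 1 := by
      rw [suppFun_smul C hCne hCcompact ω (inv_pos.mpr hc), ← hcdef, inv_mul_cancel₀ hc.ne']
    have hKL : measKL ρ (((c⁻¹ : ℝ) : ℂ) • ω)
        = measKL ρ ω + ((Real.log c : ℝ) : EReal) := by
      rw [hcast]; exact measKL_smul ρ ω hρtr c hc
    refine le_trans ?_ (le_iSup₂_of_le (((c⁻¹ : ℝ) : ℂ) • ω) ⟨hω', hsupp.le⟩ le_rfl)
    rw [hKL, EReal.neg_add (Or.inr (by simp)) (Or.inr (by simp)), rearrange, rearrange2]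
    exact helper_le _ _ _ (by linarith [Real.log_le_sub_one_of_pos hc])
  · refine iSup₂_le fun ω hω => ?_
    obtain ⟨hωpd, hω1⟩ := hω
    refine le_trans ?_ (le_iSup₂_of_le ω hωpd le_rfl)
    rw [rearrange]
    calc -measKL ρ ω = -measKL ρ ω + (((0 : ℝ)) : EReal) := by simp
      _ ≤ -measKL ρ ω + (((1 - suppFun C ω : ℝ)) : EReal) :=
          helper_le _ _ _ (by linarith)

end
end
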